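/- The lugsail Bartlett window with parameters r and c satisfies ∫_{-∞}^{∞} k_L(x)² dx = (2/(3(1-c)²)) [1 + c²/r - 3c/r + c/r²], and in particular for c = 1/2, r = 3 this equals 46/27. -/

import Mathlib

open MeasureTheory Set intervalIntegral

private lemma poly_int (a A B C : ℝ) :
    ∫ x in (0:ℝ)..a, (A + B*x + C*x^2) = A*a + B*a^2/2 + C*a^3/3 := by
  have h : ∀ x ∈ Set.uIcc (0:ℝ) a,
      HasDerivAt (fun x => A*x + B*x^2/2 + C*x^3/3) (A + B*x + C*x^2) x := by
    intro x _
    have h1 : HasDerivAt (fun x : ℝ => A*x) (A*1) x := (hasDerivAt_id x).const_mul A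
    have h2 : HasDerivAt (fun x : ℝ => B*x^2/2) (B*(2*x^1)/2) x := by
      have := ((hasDerivAt_pow 2 x).const_mul B).div_const 2
      simpa using this
    have h3 : HasDerivAt (fun x : ℝ => C*x^3/3) (C*(3*x^2)/3) x := by
      have := ((hasDerivAt_pow 3 x).const_mul C).div_const 3
      simpa using this
    have := (h1.add h2).add h3
    refine this.congr_deriv ?_
    ring
  rw [intervalIntegral.integral_eq_sub_of_hasDerivAt h
    (Continuous.intervalIntegrable (by continuity) 0 a)]
  ring

/-- The lugsail Bartlett window satisfies
∫ k_L(x)² dx = (2/(3(1-c)²)) [1 + c²/r - 3c/r + c/r²], and for c = 1/2, r = 3 this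
equals 46/27. -/
theorem lugsail_bartlett_square_integral (r c : ℝ) (hr : 1 ≤ r) (hc0 : 0 ≤ c) (hc1 : c < 1)
    (k : ℝ → ℝ) (hk : k = fun x => if |x| ≤ 1 then 1 - |x| else 0)
    (kL : ℝ → ℝ) (hkL : kL = fun x => (1 / (1 - c)) * k x - (c / (1 - c)) * k (r * x)) :
    (∫ x : ℝ, (kL x) ^ 2) = (2 / (3 * (1 - c) ^ 2)) * (1 + c ^ 2 / r - 3 * c / r + c / r ^ 2)
    ∧ (c = 1 / 2 → r = 3 → (∫ x : ℝ, (kL x) ^ 2) = 46 / 27) := by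
  have hr0 : (0:ℝ) < r := lt_of_lt_of_le one_pos hr
  have hrne : r ≠ 0 := ne_of_gt hr0
  have hcne : (1 - c) ≠ 0 := by intro h; linarith
  have hb0 : (0:ℝ) ≤ 1 / r := by positivity
  have hb1 : 1 / r ≤ 1 := by rw [div_le_one hr0]; exact hr
  -- basic facts about k
  have keq : k = fun x => max (1 - |x|) 0 := by
    funext x; rw [hk]
    by_cases h : |x| ≤ 1
    · simp only [if_pos h]; exact (max_eq_left (by linarith)).symm
    · simp only [if_neg h]; exact (max_eq_right (by push_neg at h; linarith)).symm
  have hkc : Continuous k := by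
    rw [keq]; exact (continuous_const.sub continuous_abs).max continuous_const
  have hks' : ∀ x : ℝ, |x| ≤ 1 → k x = 1 - |x| := by
    intro x hx; rw [hk]; simp [hx]
  have hks0 : ∀ x : ℝ, 1 < |x| → k x = 0 := by
    intro x hx; rw [hk]; simp only; rw [if_neg (by linarith)]
  have hmem : ∀ a x : ℝ, x ∉ Icc (-a) a → a < |x| := by
    intro a x hx
    rw [mem_Icc, ← abs_le] at hx
    exact lt_of_not_ge hx
  have hks : ∀ x : ℝ, x ∉ Icc (-1:ℝ) 1 → k x = 0 := fun x hx => hks0 x (hmem 1 x hx)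
  have hkrs : ∀ x : ℝ, x ∉ Icc (-1:ℝ) 1 → k (r * x) = 0 := by
    intro x hx
    apply hks0
    have h1 : 1 < |x| := hmem 1 x hx
    rw [abs_mul, abs_of_pos hr0]
    calc (1:ℝ) < |x| := h1
    _ = 1 * |x| := (one_mul _).symm
    _ ≤ r * |x| := mul_le_mul_of_nonneg_right hr (abs_nonneg x)
  have hkrs' : ∀ x : ℝ, x ∉ Icc (-(1/r)) (1/r) → k x * k (r * x) = 0 := by
    intro x hx
    have h1 : 1/r < |x| := hmem (1/r) x hx
    have h2 : 1 < |r * x| := by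
      rw [abs_mul, abs_of_pos hr0, ← div_lt_iff₀' hr0]
      exact h1
    rw [hks0 _ h2, mul_zero]
  have hkc2 : Continuous fun x => k (r * x) := hkc.comp (continuous_const.mul continuous_id)
  -- integrability
  have int1 : Integrable (fun x => (k x)^2) := by
    apply (hkc.pow 2).integrable_of_hasCompactSupport
    exact HasCompactSupport.intro (isCompact_Icc (a := (-1:ℝ)) (b := 1)) (fun x hx => by simp [hks x hx])
  have int2 : Integrable (fun x => (k (r * x))^2) := by
    apply (hkc2.pow 2).integrable_of_hasCompactSupport
    exact HasCompactSupport.intro (isCompact_Icc (a := (-1:ℝ)) (b := 1)) (fun x hx => by simp [hkrs x hx])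
  have int3 : Integrable (fun x => k x * k (r * x)) := by
    apply (hkc.mul hkc2).integrable_of_hasCompactSupport
    exact HasCompactSupport.intro (isCompact_Icc (a := (-1:ℝ)) (b := 1)) (fun x hx => by simp [hks x hx])
  -- reduction to interval integrals
  have reduce : ∀ (f : ℝ → ℝ) (a : ℝ), 0 ≤ a → (∀ x, x ∉ Icc (-a) a → f x = 0) →
      (∫ x : ℝ, f x) = ∫ x in (-a)..a, f x := by
    intro f a ha h0
    rw [intervalIntegral.integral_of_le (by linarith), ← integral_Icc_eq_integral_Ioc,
      setIntegral_eq_integral_of_forall_compl_eq_zero h0]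
  have hsymm : ∀ (f : ℝ → ℝ) (a : ℝ),
      (∫ x in (-a)..(0:ℝ), f x) = ∫ x in (0:ℝ)..a, f (-x) := by
    intro f a
    rw [intervalIntegral.integral_comp_neg f]
    norm_num
  -- pieces on [0,1]
  have P1 : ∫ x in (0:ℝ)..1, (k x)^2 = 1/3 := by
    have hcg : ∀ x ∈ Set.uIcc (0:ℝ) 1, (k x)^2 = 1 + (-2)*x + 1*x^2 := by
      intro x hx
      rw [Set.uIcc_of_le (by norm_num), mem_Icc] at hx
      rw [hks' x (by rw [abs_of_nonneg hx.1]; exact hx.2), abs_of_nonneg hx.1]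
      ring
    rw [intervalIntegral.integral_congr hcg, poly_int]
    norm_num
  have P1' : ∫ x in (0:ℝ)..1, (k (-x))^2 = 1/3 := by
    have hcg : ∀ x ∈ Set.uIcc (0:ℝ) 1, (k (-x))^2 = 1 + (-2)*x + 1*x^2 := by
      intro x hx
      rw [Set.uIcc_of_le (by norm_num), mem_Icc] at hx
      rw [hks' (-x) (by rw [abs_neg, abs_of_nonneg hx.1]; exact hx.2), abs_neg,
        abs_of_nonneg hx.1]
      ring
    rw [intervalIntegral.integral_congr hcg, poly_int]
    norm_num
  -- pieces on [0,1/r]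
  have hcross : ∀ x : ℝ, 0 ≤ x → x ≤ 1/r → k x * k (r * x) = 1 + (-(1+r))*x + r*x^2 := by
    intro x hx0 hx1
    have hrx : r * x ≤ 1 := by
      calc r * x ≤ r * (1/r) := mul_le_mul_of_nonneg_left hx1 hr0.le
      _ = 1 := by field_simp
    rw [hks' x (by rw [abs_of_nonneg hx0]; linarith),
      hks' (r*x) (by rw [abs_of_nonneg (by positivity)]; exact hrx),
      abs_of_nonneg hx0, abs_of_nonneg (mul_nonneg hr0.le hx0)]
    ring
  have P3 : ∫ x in (0:ℝ)..(1/r), k x * k (r * x) = 1/(2*r) - 1/(6*r^2) := by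
    have hcg : ∀ x ∈ Set.uIcc (0:ℝ) (1/r),
        k x * k (r * x) = 1 + (-(1+r))*x + r*x^2 := by
      intro x hx
      rw [Set.uIcc_of_le hb0, mem_Icc] at hx
      exact hcross x hx.1 hx.2
    rw [intervalIntegral.integral_congr hcg, poly_int]
    field_simp
    ring
  have P3' : ∫ x in (0:ℝ)..(1/r), k (-x) * k (r * -x) = 1/(2*r) - 1/(6*r^2) := by
    have hcg : ∀ x ∈ Set.uIcc (0:ℝ) (1/r),
        k (-x) * k (r * -x) = 1 + (-(1+r))*x + r*x^2 := by
      intro x hx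
      rw [Set.uIcc_of_le hb0, mem_Icc] at hx
      have he1 : k (-x) = k x := by rw [keq]; simp
      have he2 : k (r * -x) = k (r * x) := by rw [keq]; simp [abs_mul]
      rw [he1, he2]
      exact hcross x hx.1 hx.2
    rw [intervalIntegral.integral_congr hcg, poly_int]
    field_simp
    ring
  -- the three integrals
  have I1 : (∫ x : ℝ, (k x)^2) = 2/3 := by
    rw [reduce (fun x => (k x)^2) 1 zero_le_one (fun x hx => by simp [hks x hx]),
      ← intervalIntegral.integral_add_adjacent_intervals (f := fun x => (k x)^2) (a := (-1:ℝ)) (b := 0) (c := 1)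
        ((hkc.pow 2).intervalIntegrable _ _) ((hkc.pow 2).intervalIntegrable _ _),
      hsymm (fun x => (k x)^2) 1]
    beta_reduce
    rw [P1', P1]
    norm_num
  have I2 : (∫ x : ℝ, (k (r * x))^2) = 2/(3*r) := by
    have h := MeasureTheory.Measure.integral_comp_mul_left (fun y => (k y)^2) r
    calc (∫ x : ℝ, (k (r * x))^2) = |r⁻¹| • ∫ y : ℝ, (k y)^2 := h
    _ = 2/(3*r) := by
        rw [I1, abs_inv, abs_of_pos hr0, smul_eq_mul]
        field_simp
  have I3 : (∫ x : ℝ, k x * k (r * x)) = 1/r - 1/(3*r^2) := by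
    rw [reduce (fun x => k x * k (r * x)) (1/r) hb0 hkrs',
      ← intervalIntegral.integral_add_adjacent_intervals (f := fun x => k x * k (r * x)) (a := -(1/r)) (b := 0) (c := 1/r)
        ((hkc.mul hkc2).intervalIntegrable _ _) ((hkc.mul hkc2).intervalIntegrable _ _),
      hsymm (fun x => k x * k (r * x)) (1/r)]
    beta_reduce
    rw [P3', P3]
    field_simp
    ring
  -- main computation
  have main : (∫ x : ℝ, (kL x) ^ 2)
      = (2 / (3 * (1 - c) ^ 2)) * (1 + c ^ 2 / r - 3 * c / r + c / r ^ 2) := by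
    have hexp : (∫ x : ℝ, (kL x) ^ 2) = ∫ x : ℝ, ((1/(1-c))^2 * (k x)^2
        + ((c/(1-c))^2 * (k (r * x))^2
          - (2*(1/(1-c))*(c/(1-c))) * (k x * k (r * x)))) := by
      congr 1; funext x; rw [hkL]; ring
    have intg : Integrable (fun x => (c/(1-c))^2 * (k (r * x))^2
        - (2*(1/(1-c))*(c/(1-c))) * (k x * k (r * x))) :=
      (int2.const_mul _).sub (int3.const_mul _)
    rw [hexp, integral_add (int1.const_mul _) intg,
      integral_sub (int2.const_mul _) (int3.const_mul _),
      MeasureTheory.integral_const_mul, MeasureTheory.integral_const_mul, MeasureTheory.integral_const_mul, I1, I2, I3]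
    field_simp
    ring
  refine ⟨main, fun h1 h2 => ?_⟩
  rw [main, h1, h2]
  norm_num
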